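/- For all positive integers t and nonnegative integers n, the sum over all t-tuples (i_1,...,i_t) of nonnegative integers with i_1+...+i_t = n of binomial(2i_1,i_1)*...*binomial(2i_t,i_t) equals 4^n * binomial(n + t/2 - 1, n). -/

import Mathlib

open Finset Polynomial

noncomputable def rchoose (x : ℝ) (k : ℕ) : ℝ :=
  (∏ j ∈ Finset.range k, (x - j)) / (Nat.factorial k : ℝ)

lemma smeval_descPochhammer_real (x : ℝ) : ∀ k : ℕ,
    (descPochhammer ℤ k).smeval x = ∏ j ∈ Finset.range k, (x - j)
  | 0 => by simp [smeval_one]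
  | k + 1 => by
    rw [descPochhammer_succ_right, smeval_mul, smeval_sub, smeval_X,
      smeval_natCast, smeval_descPochhammer_real x k, prod_range_succ]
    ring

lemma rchoose_eq (x : ℝ) (k : ℕ) : rchoose x k = Ring.choose x k := by
  have h := Ring.descPochhammer_eq_factorial_smul_choose x k
  rw [smeval_descPochhammer_real] at h
  rw [rchoose, h, nsmul_eq_mul, mul_div_cancel_left₀]
  exact_mod_cast Nat.factorial_ne_zero k

lemma rchoose_zero (x : ℝ) : rchoose x 0 = 1 := by simp [rchoose]

lemma rchoose_succ_succ (x : ℝ) (k : ℕ) :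
    rchoose (x + 1) (k + 1) = (x + 1) / (k + 1) * rchoose x k := by
  have h : ∏ j ∈ range (k + 1), (x + 1 - j) = (x + 1) * ∏ j ∈ range k, (x - j) := by
    rw [prod_range_succ', Nat.cast_zero, sub_zero, mul_comm]
    congr 1
    exact prod_congr rfl fun j _ => by push_cast; ring
  rw [rchoose, rchoose, h, Nat.factorial_succ]
  push_cast
  field_simp

lemma rchoose_reflect (c : ℝ) (k : ℕ) :
    rchoose ((k : ℝ) + c - 1) k = (-1) ^ k * rchoose (-c) k := by
  have h : ∏ j ∈ range k, ((k : ℝ) + c - 1 - j) = ∏ j ∈ range k, (c + j) := by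
    rw [← Finset.prod_range_reflect (fun j => c + j) k]
    refine prod_congr rfl fun j hj => ?_
    rw [mem_range] at hj
    have he : k - 1 - j = k - (1 + j) := by omega
    have : ((k - 1 - j : ℕ) : ℝ) = (k : ℝ) - 1 - j := by
      rw [he, Nat.cast_sub (by omega)]
      push_cast; ring
    rw [this]; ring
  have h2 : ∏ j ∈ range k, (c + (j : ℝ)) = (-1) ^ k * ∏ j ∈ range k, (-c - j) := by
    rw [show ((-1 : ℝ)) ^ k = ∏ _j ∈ range k, (-1 : ℝ) by simp, ← prod_mul_distrib]
    exact prod_congr rfl fun j _ => by ring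
  rw [rchoose, rchoose, h, h2, mul_div_assoc]

lemma centralBinom_cast (n : ℕ) :
    (Nat.centralBinom n : ℝ) = 4 ^ n * rchoose ((n : ℝ) - 1 / 2) n := by
  induction n with
  | zero => simp [Nat.centralBinom, rchoose]
  | succ n ih =>
    have h := Nat.succ_mul_centralBinom_succ n
    have hc : ((n : ℝ) + 1) * (Nat.centralBinom (n + 1) : ℝ)
        = 2 * (2 * n + 1) * Nat.centralBinom n := by exact_mod_cast h
    have hn1 : ((n : ℝ) + 1) ≠ 0 := by positivity
    have hr : ((n + 1 : ℕ) : ℝ) - 1 / 2 = ((n : ℝ) - 1 / 2) + 1 := by push_cast; ring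
    rw [hr, rchoose_succ_succ]
    have : (Nat.centralBinom (n + 1) : ℝ)
        = 2 * (2 * n + 1) * Nat.centralBinom n / ((n : ℝ) + 1) := by
      field_simp at hc ⊢; linarith [hc]
    rw [this, ih]
    field_simp
    ring

lemma vandermonde_key (y : ℝ) (n : ℕ) :
    ∑ p ∈ Finset.HasAntidiagonal.antidiagonal n,
        (4 : ℝ) ^ p.1 * rchoose ((p.1 : ℝ) - 1 / 2) p.1
          * (4 ^ p.2 * rchoose ((p.2 : ℝ) + y - 1) p.2)
      = 4 ^ n * rchoose ((n : ℝ) + (y + 1 / 2) - 1) n := by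
  have hv : rchoose (-(1 / 2) + -y) n
      = ∑ ij ∈ Finset.HasAntidiagonal.antidiagonal n, rchoose (-(1 / 2)) ij.1 * rchoose (-y) ij.2 := by
    simp only [rchoose_eq]
    exact Ring.add_choose_eq (r := (-(1 / 2) : ℝ)) (s := -y) n (mul_comm _ _)
  rw [rchoose_reflect, show (-(y + 1 / 2) : ℝ) = -(1 / 2) + -y by ring, hv]
  have step : ∀ p ∈ Finset.HasAntidiagonal.antidiagonal n,
      (4 : ℝ) ^ p.1 * rchoose ((p.1 : ℝ) - 1 / 2) p.1
          * (4 ^ p.2 * rchoose ((p.2 : ℝ) + y - 1) p.2)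
        = 4 ^ n * ((-1) ^ n * (rchoose (-(1/2) : ℝ) p.1 * rchoose (-y) p.2)) := by
    intro p hp
    rw [Finset.HasAntidiagonal.mem_antidiagonal] at hp
    have h1 : ((p.1 : ℝ) - 1 / 2) = (p.1 : ℝ) + (1/2 : ℝ) - 1 := by ring
    rw [h1, rchoose_reflect, rchoose_reflect]
    rw [← hp]
    rw [show (-(1/2:ℝ)) = -(1/2 : ℝ) from rfl]
    rw [pow_add, pow_add]
    ring
  rw [Finset.sum_congr rfl step, ← Finset.mul_sum, ← Finset.mul_sum]

lemma peel (g : ℕ → ℝ) (t n : ℕ) :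
    ∑ f ∈ Finset.Nat.antidiagonalTuple (t + 1) n, ∏ m : Fin (t + 1), g (f m)
      = ∑ p ∈ Finset.HasAntidiagonal.antidiagonal n,
          g p.1 * ∑ f ∈ Finset.Nat.antidiagonalTuple t p.2, ∏ m : Fin t, g (f m) := by
  simp only [Finset.mul_sum]
  rw [Finset.sum_sigma']
  refine Finset.sum_nbij'
    (fun f => (⟨(f 0, ∑ m : Fin t, Fin.tail f m), Fin.tail f⟩ :
      (_ : ℕ × ℕ) × (Fin t → ℕ)))
    (fun x => Fin.cons x.1.1 x.2) ?_ ?_ ?_ ?_ ?_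
  · intro f hf
    simp only [Finset.Nat.mem_antidiagonalTuple] at hf
    simp only [Finset.mem_sigma, Finset.HasAntidiagonal.mem_antidiagonal, Finset.Nat.mem_antidiagonalTuple]
    refine ⟨?_, trivial⟩
    rw [← hf, Fin.sum_univ_succ]
    rfl
  · intro x hx
    simp only [Finset.mem_sigma, Finset.HasAntidiagonal.mem_antidiagonal,
      Finset.Nat.mem_antidiagonalTuple] at hx ⊢
    rw [Fin.sum_cons, hx.2, hx.1]
  · intro f _
    simp only
    exact Fin.cons_self_tail f
  · intro x hx
    simp only [Finset.mem_sigma, Finset.HasAntidiagonal.mem_antidiagonal,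
      Finset.Nat.mem_antidiagonalTuple] at hx
    simp only [Fin.cons_zero, Fin.tail_cons]
    congr 1
    exact Prod.ext rfl hx.2
  · intro f _
    simp only
    rw [Fin.prod_univ_succ]
    congr 1

lemma rchoose_nat_succ (n : ℕ) : rchoose ((n : ℝ)) (n + 1) = 0 := by
  rw [rchoose, Finset.prod_eq_zero (Finset.self_mem_range_succ n) (by simp), zero_div]

lemma main_aux (t : ℕ) : ∀ n : ℕ,
    ((∑ f ∈ Finset.Nat.antidiagonalTuple t n,
        ∏ m : Fin t, Nat.centralBinom (f m) : ℕ) : ℝ)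
      = 4 ^ n * rchoose ((n : ℝ) + (t : ℝ) / 2 - 1) n := by
  induction t with
  | zero =>
    intro n
    match n with
    | 0 => simp [Finset.Nat.antidiagonalTuple_zero_zero, rchoose_zero]
    | n + 1 =>
      rw [Finset.Nat.antidiagonalTuple_zero_succ]
      have h : ((n + 1 : ℕ) : ℝ) + (0 : ℕ) / 2 - 1 = (n : ℝ) := by push_cast; ring
      rw [h, rchoose_nat_succ]
      simp
  | succ t ih =>
    intro n
    have ih' : ∀ j : ℕ, ∑ f ∈ Finset.Nat.antidiagonalTuple t j,
        ∏ m : Fin t, (Nat.centralBinom (f m) : ℝ)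
          = 4 ^ j * rchoose ((j : ℝ) + (t : ℝ) / 2 - 1) j := by
      intro j
      have := ih j
      push_cast at this
      exact this
    push_cast
    rw [peel (fun k => (Nat.centralBinom k : ℝ)) t n]
    have step : ∀ p ∈ Finset.HasAntidiagonal.antidiagonal n,
        (Nat.centralBinom p.1 : ℝ) * ∑ f ∈ Finset.Nat.antidiagonalTuple t p.2,
            ∏ m : Fin t, (Nat.centralBinom (f m) : ℝ)
          = 4 ^ p.1 * rchoose ((p.1 : ℝ) - 1 / 2) p.1
              * (4 ^ p.2 * rchoose ((p.2 : ℝ) + (t : ℝ) / 2 - 1) p.2) := by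
      intro p _
      rw [centralBinom_cast, ih' p.2]
    rw [Finset.sum_congr rfl step, vandermonde_key ((t : ℝ) / 2) n]
    have h : (n : ℝ) + ((t : ℝ) / 2 + 1 / 2) - 1 = (n : ℝ) + ((t : ℕ) + 1 : ℕ) / 2 - 1 := by
      push_cast; ring
    rw [h]
    push_cast
    ring

theorem chang_xu (t : ℕ) (ht : 0 < t) (n : ℕ) :
    ((∑ f ∈ Finset.Nat.antidiagonalTuple t n,
        ∏ m : Fin t, Nat.centralBinom (f m) : ℕ) : ℝ)
      = 4 ^ n * rchoose ((n : ℝ) + (t : ℝ) / 2 - 1) n := main_aux t n
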